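/- Let v ∈ ℂⁿ and let I₀, I₁, …, I_m be a partition of {1,…,n} such that v_j = 0 iff j ∈ I₀, and v_j = v_k iff j,k lie in a common block I_ℓ. Then the solution space of the linear system (V(v))ᵀ s = 0, where V(v) is the n×n matrix with entries V(v)_{jk} = v_j^k, equals the linear subspace of ℂⁿ defined by the equations ∑_{j∈I_k} s_j = 0 for k = 1,…,m. -/

import Mathlib

open Matrix BigOperators

/-- Jacobian determinant of a map `f : ℂ^ι → ℂ^ι` at `x`. -/
noncomputable def jacDet {ι : Type*} [Fintype ι] [DecidableEq ι]
    (f : (ι → ℂ) → (ι → ℂ)) (x : ι → ℂ) : ℂ :=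
  (LinearMap.toMatrix (Pi.basisFun ℂ ι) (Pi.basisFun ℂ ι)
    (fderiv ℂ f x).toLinearMap).det

/-- The map `x ↦ x + φ(Ax)`, with `φ` applied entrywise. -/
noncomputable def phiMap {ι : Type*} [Fintype ι] (A : Matrix ι ι ℂ) (φ : ℂ → ℂ)
    (x : ι → ℂ) : ι → ℂ :=
  fun j => x j + φ (A.mulVec x j)

/-- Domain of definition of `x ↦ x + φ(Ax)` for `φ` defined on `Ω`. -/
def phiDom {ι : Type*} [Fintype ι] (A : Matrix ι ι ℂ) (Ω : Set ℂ) : Set (ι → ℂ) :=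
  {x | ∀ j, A.mulVec x j ∈ Ω}

/-- `(A, φ)` is a good pair: the Jacobian of `x + φ(Ax)` is identically a nonzero constant. -/
def IsGoodPair {ι : Type*} [Fintype ι] [DecidableEq ι]
    (A : Matrix ι ι ℂ) (Ω : Set ℂ) (φ : ℂ → ℂ) : Prop :=
  ∃ c : ℂ, c ≠ 0 ∧ ∀ x ∈ phiDom A Ω, jacDet (phiMap A φ) x = c

/-- A matrix is universal if it forms a good pair with every analytic function. -/
def IsUniversal {ι : Type*} [Fintype ι] [DecidableEq ι] (A : Matrix ι ι ℂ) : Prop :=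
  ∀ (Ω : Set ℂ) (φ : ℂ → ℂ), IsOpen Ω → Ω.Nonempty → IsPreconnected Ω →
    AnalyticOn ℂ φ Ω → (phiDom A Ω).Nonempty → IsGoodPair A Ω φ

/-- The principal minor of `A` indexed by `I`. -/
noncomputable def principalMinor {ι : Type*} [DecidableEq ι] (A : Matrix ι ι ℂ)
    (I : Finset ι) : ℂ :=
  (A.submatrix (fun i : I => (i : ι)) (fun i : I => (i : ι))).det

theorem stmt0 (n m : ℕ) (v : Fin n → ℂ) (I : Fin (m + 1) → Finset (Fin n))
    (hdisj : ∀ j k, j ≠ k → Disjoint (I j) (I k))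
    (hunion : Finset.univ.biUnion I = Finset.univ)
    (hne : ∀ ℓ : Fin (m + 1), ℓ ≠ 0 → (I ℓ).Nonempty)
    (hzero : ∀ j, v j = 0 ↔ j ∈ I 0)
    (heq : ∀ j k, v j = v k ↔ ∃ ℓ, j ∈ I ℓ ∧ k ∈ I ℓ)
    (s : Fin n → ℂ) :
    (Matrix.of fun j k : Fin n => v j ^ ((k : ℕ) + 1)).transpose.mulVec s = 0 ↔
      ∀ ℓ : Fin (m + 1), ℓ ≠ 0 → ∑ j ∈ I ℓ, s j = 0 := by
  classical
  have hrepex : ∀ i : Fin m, ∃ j, j ∈ I i.succ := fun i => hne i.succ (Fin.succ_ne_zero i)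
  choose r hr using hrepex
  set u : Fin m → ℂ := fun i => v (r i) with hu
  have hconst : ∀ (ℓ : Fin (m+1)) (j j' : Fin n), j ∈ I ℓ → j' ∈ I ℓ → v j = v j' := by
    intro ℓ j j' hj hj'
    exact (heq j j').mpr ⟨ℓ, hj, hj'⟩
  have hmem_unique : ∀ (ℓ ℓ' : Fin (m+1)) (j : Fin n), j ∈ I ℓ → j ∈ I ℓ' → ℓ = ℓ' := by
    intro ℓ ℓ' j hj hj'
    by_contra h
    exact (Finset.disjoint_left.mp (hdisj ℓ ℓ' h) hj) hj'
  have huinj : Function.Injective u := by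
    intro i i' h
    obtain ⟨ℓ, h1, h2⟩ := (heq (r i) (r i')).mp h
    have e1 := hmem_unique _ _ _ (hr i) h1
    have e2 := hmem_unique _ _ _ (hr i') h2
    exact Fin.succ_injective _ (e1.trans e2.symm)
  have hune : ∀ i, u i ≠ 0 := by
    intro i h0
    have h1 : r i ∈ I 0 := (hzero (r i)).mp h0
    exact Fin.succ_ne_zero i (hmem_unique _ _ _ (hr i) h1)
  have hrinj : Function.Injective r := by
    intro i i' h
    have := hmem_unique _ _ _ (hr i) (h ▸ hr i')
    exact Fin.succ_injective _ this
  have hmn : m ≤ n := by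
    simpa using Fintype.card_le_of_injective r hrinj
  have key : ∀ k : ℕ, ∑ j : Fin n, v j ^ (k+1) * s j
      = ∑ i : Fin m, u i ^ (k+1) * ∑ j ∈ I i.succ, s j := by
    intro k
    have hdisj' : Set.PairwiseDisjoint ↑(Finset.univ : Finset (Fin (m+1))) I := by
      intro a _ b _ hab; exact hdisj a b hab
    calc ∑ j : Fin n, v j ^ (k+1) * s j
        = ∑ j ∈ Finset.univ.biUnion I, v j ^ (k+1) * s j := by rw [hunion]
      _ = ∑ ℓ : Fin (m+1), ∑ j ∈ I ℓ, v j ^ (k+1) * s j := Finset.sum_biUnion hdisj'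
      _ = (∑ j ∈ I 0, v j ^ (k+1) * s j)
            + ∑ i : Fin m, ∑ j ∈ I (Fin.succ i), v j ^ (k+1) * s j :=
          Fin.sum_univ_succ _
      _ = ∑ i : Fin m, u i ^ (k+1) * ∑ j ∈ I i.succ, s j := by
          rw [Finset.sum_eq_zero, zero_add]
          · refine Finset.sum_congr rfl fun i _ => ?_
            rw [Finset.mul_sum]
            refine Finset.sum_congr rfl fun j hj => ?_
            rw [hconst i.succ j (r i) hj (hr i)]
          · intro j hj
            rw [(hzero j).mpr hj, zero_pow (Nat.succ_ne_zero k), zero_mul]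
  constructor
  · intro h
    set M : Matrix (Fin m) (Fin m) ℂ := Matrix.of fun k i => u i ^ ((k : ℕ)+1) with hM
    have hdet : M.det ≠ 0 := by
      have hMeq : M = (Matrix.vandermonde u)ᵀ * Matrix.diagonal u := by
        ext k i
        simp [hM, Matrix.mul_diagonal, Matrix.transpose_apply, Matrix.vandermonde_apply,
          pow_succ]
      rw [hMeq, Matrix.det_mul, Matrix.det_transpose, Matrix.det_vandermonde,
        Matrix.det_diagonal]
      refine mul_ne_zero ?_ ?_
      · refine Finset.prod_ne_zero_iff.mpr fun i _ => ?_
        refine Finset.prod_ne_zero_iff.mpr fun j hj => ?_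
        have : i ≠ j := by
          intro e; subst e; simp at hj
        exact sub_ne_zero.mpr fun e => this (huinj e).symm
      · exact Finset.prod_ne_zero_iff.mpr fun i _ => hune i
    have hMT : M.mulVec (fun i => ∑ j ∈ I i.succ, s j) = 0 := by
      funext k
      have hk := congrFun h (Fin.castLE hmn k)
      simp only [Matrix.mulVec, dotProduct, Matrix.transpose_apply, Matrix.of_apply,
        Pi.zero_apply, Fin.coe_castLE] at hk ⊢
      rw [hM]
      simpa using (key (k : ℕ)).symm.trans hk
    have hT0 := Matrix.eq_zero_of_mulVec_eq_zero hdet hMT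
    intro ℓ hℓ
    obtain ⟨i, rfl⟩ := Fin.exists_succ_eq.mpr hℓ
    exact congrFun hT0 i
  · intro h
    funext k
    simp only [Matrix.mulVec, dotProduct, Matrix.transpose_apply, Matrix.of_apply,
      Pi.zero_apply]
    rw [key (k : ℕ)]
    exact Finset.sum_eq_zero fun i _ => by rw [h i.succ (Fin.succ_ne_zero i), mul_zero]
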